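/- The translation tr₁ from L_C to L′_C, defined by the clauses tr₁(Y=y) = []Y=y; tr₁(¬φ) = ¬tr₁(φ); tr₁(φ₁∧φ₂) = tr₁(φ₁)∧tr₁(φ₂); tr₁([X⃗:=x⃗]Y=y) = [X⃗:=x⃗]Y=y; tr₁([X⃗:=x⃗]¬φ) = tr₁(¬[X⃗:=x⃗]φ); tr₁([X⃗:=x⃗](φ₁∧φ₂)) = tr₁([X⃗:=x⃗]φ₁ ∧ [X⃗:=x⃗]φ₂); tr₁([X⃗:=x⃗][Y⃗:=y⃗]φ) = tr₁([X⃗′:=x⃗′, Y⃗:=y⃗]φ) with X⃗′ = X⃗ \ Y⃗, is well defined and satisfies, for every L_C formula φ: (1) tr₁(φ) ∈ L′_C; (2) φ ↔ tr₁(φ) is provable in the system L_C; (3) φ ↔ tr₁(φ) is valid over recursive causal models. -/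

import Mathlib

open Classical

/-- A finite signature: variables sorted into exogenous and endogenous, each with a
finite nonempty range of values. -/
structure Sig : Type 1 where
  Var : Type
  exo : Var → Prop
  Val : Var → Type
  [decEqVar : DecidableEq Var]
  [finVar : Fintype Var]
  [neVar : Nonempty Var]
  [decEqVal : ∀ X : Var, DecidableEq (Val X)]
  [finVal : ∀ X : Var, Fintype (Val X)]
  [neVal : ∀ X : Var, Nonempty (Val X)]

attribute [instance] Sig.decEqVar Sig.finVar Sig.neVar Sig.decEqVal Sig.finVal Sig.neVal

variable {S : Sig}

/-- A valuation: a value for each variable. -/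
abbrev Env (S : Sig) : Type := ∀ X : S.Var, S.Val X

instance : Nonempty (Env S) := ⟨fun X => Classical.arbitrary (S.Val X)⟩

/-- Values for all variables other than `V`. -/
abbrev Others (S : Sig) (V : S.Var) : Type := ∀ X : {X : S.Var // X ≠ V}, S.Val X.val

/-- The restriction of a valuation to the variables other than `V`. -/
def Env.restrict (A : Env S) (V : S.Var) : Others S V := fun X => A X.val

/-- A family of structural functions (only the components at endogenous variables
are meaningful). -/
abbrev StructFuns (S : Sig) : Type := ∀ V : S.Var, Others S V → S.Val V

/-- A valuation complies with the structural functions: the value of each endogenous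
variable is obtained by applying its structural function to the values of all
other variables. -/
def Complies (F : StructFuns S) (A : Env S) : Prop :=
  ∀ V : S.Var, ¬ S.exo V → A V = F V (A.restrict V)

/-- The endogenous variable `V` is directly causally affected by `X` under `F`. -/
def DirAff (F : StructFuns S) (X V : S.Var) : Prop :=
  ¬ S.exo V ∧ ∃ (h : X ≠ V) (g : Others S V) (x₁ x₂ : S.Val X),
    x₁ ≠ x₂ ∧
      F V (Function.update g ⟨X, h⟩ x₁) ≠ F V (Function.update g ⟨X, h⟩ x₂)

/-- `F` is recursive: the transitive closure of the direct causal dependence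
relation is asymmetric (transitivity is automatic for `Relation.TransGen`). -/
def RecursiveF (F : StructFuns S) : Prop :=
  ∀ a b : S.Var, Relation.TransGen (DirAff F) a b → ¬ Relation.TransGen (DirAff F) b a

/-- An assignment of values to a set of pairwise distinct variables. -/
abbrev Intervention (S : Sig) : Type := ∀ X : S.Var, Option (S.Val X)

/-- The empty assignment. -/
def iEmpty (S : Sig) : Intervention S := fun _ => none

/-- Extend an assignment by additionally setting `Y` to `y` (overriding). -/
def iUpd (I : Intervention S) (Y : S.Var) (y : S.Val Y) : Intervention S :=
  Function.update I Y (some y)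

/-- Combine assignments, the second overriding the first:  `[X⃗ := x⃗, Y⃗ := y⃗]`. -/
def icomp (I J : Intervention S) : Intervention S := fun W =>
  match J W with
  | some v => some v
  | none => I W

/-- The intervened family of structural functions: intervened variables get the
constant function returning the assigned value; the rest are unchanged. -/
def intF (F : StructFuns S) (I : Intervention S) : StructFuns S :=
  fun V g => (I V).getD (F V g)

/-- `A'` is the result of intervening with `I` on the valuation `A` (w.r.t. `F`):
exogenous intervened variables get the assigned value, exogenous non-intervened
variables keep their value, and each endogenous variable complies with its new
structural function. -/
def IntervenedVal (F : StructFuns S) (A : Env S) (I : Intervention S) (A' : Env S) : Prop :=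
  (∀ X : S.Var, S.exo X → ∀ v : S.Val X, I X = some v → A' X = v) ∧
  (∀ X : S.Var, S.exo X → I X = none → A' X = A X) ∧
  (∀ V : S.Var, ¬ S.exo V → A' V = intF F I V (A'.restrict V))

/-- The intervened valuation (unique when `F` is recursive). -/
noncomputable def intVal (F : StructFuns S) (A : Env S) (I : Intervention S) : Env S :=
  Classical.epsilon (IntervenedVal F A I)

/-- The language L_C: atoms `Y = y`, negation, conjunction, interventionist
counterfactual operators. -/
inductive Form (S : Sig) : Type where
  | eq (Y : S.Var) (y : S.Val Y) : Form S
  | neg (φ : Form S) : Form S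
  | conj (φ ψ : Form S) : Form S
  | int (I : Intervention S) (φ : Form S) : Form S

namespace Form

/-- Material implication, defined from `¬` and `∧` as usual. -/
def impl (φ ψ : Form S) : Form S := Form.neg (Form.conj φ (Form.neg ψ))

/-- Disjunction, defined from `¬` and `∧` as usual. -/
def orF (φ ψ : Form S) : Form S := Form.neg (Form.conj (Form.neg φ) (Form.neg ψ))

/-- Biconditional. -/
def iffF (φ ψ : Form S) : Form S := Form.conj (impl φ ψ) (impl ψ φ)

end Form

/-- A canonical contradiction. -/
noncomputable def botF (S : Sig) : Form S :=
  let X : S.Var := Classical.arbitrary S.Var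
  let x : S.Val X := Classical.arbitrary (S.Val X)
  Form.conj (Form.eq X x) (Form.neg (Form.eq X x))

/-- A canonical tautology. -/
noncomputable def topF (S : Sig) : Form S := Form.neg (botF S)

/-- Disjunction of a list of formulas (the empty disjunction is a contradiction). -/
noncomputable def bigOr : List (Form S) → Form S
  | [] => botF S
  | φ :: l => l.foldl Form.orF φ

/-- Conjunction of a list of formulas (the empty conjunction is a tautology). -/
noncomputable def bigConj : List (Form S) → Form S
  | [] => topF S
  | φ :: l => l.foldl Form.conj φ

/-- `φ` is an instance of a propositional tautology: it evaluates to `true` under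
every Boolean valuation that respects negation and conjunction (treating all
other formulas as atoms). -/
def Tauto (φ : Form S) : Prop :=
  ∀ v : Form S → Bool,
    (∀ ψ : Form S, v (Form.neg ψ) = !(v ψ)) →
    (∀ ψ χ : Form S, v (Form.conj ψ χ) = (v ψ && v χ)) →
    v φ = true

/-- The assignment `[Z⃗ := z⃗, X := x]` where `Z⃗` lists all variables other than
`X` and `V`, used in the formula `X ⇝ V`. -/
def ltInt (X V : S.Var) (g : ∀ W : {W : S.Var // W ≠ X ∧ W ≠ V}, S.Val W.val)
    (x : S.Val X) : Intervention S := fun W =>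
  if h : W = X then some (h.symm ▸ x)
  else if h' : W = V then none
  else some (g ⟨W, ⟨h, h'⟩⟩)

/-- The formula `X ⇝ V`: the disjunction, over tuples `z⃗` of values for all
variables other than `X` and `V`, distinct values `x₁ ≠ x₂` of `X` and distinct
values `v₁ ≠ v₂` of `V`, of `[Z⃗:=z⃗, X:=x₁]V=v₁ ∧ [Z⃗:=z⃗, X:=x₂]V=v₂`. -/
noncomputable def leadsTo (X V : S.Var) : Form S :=
  bigOr ((Finset.univ.filter
      (fun p : (∀ W : {W : S.Var // W ≠ X ∧ W ≠ V}, S.Val W.val) ×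
          (S.Val X × S.Val X) × (S.Val V × S.Val V) =>
        p.2.1.1 ≠ p.2.1.2 ∧ p.2.2.1 ≠ p.2.2.2)).toList.map
    (fun p =>
      Form.conj
        (Form.int (ltInt X V p.1 p.2.1.1) (Form.eq V p.2.2.1))
        (Form.int (ltInt X V p.1 p.2.1.2) (Form.eq V p.2.2.2))))

/-- The chain `X₀ ⇝ X₁ ∧ ⋯ ∧ X_k ⇝ X_{k+1}`. -/
noncomputable def chainConj (X : ℕ → S.Var) : ℕ → Form S
  | 0 => leadsTo (X 0) (X 1)
  | n + 1 => Form.conj (chainConj X n) (leadsTo (X (n + 1)) (X (n + 2)))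

/-- `ψ₁ → (ψ₂ → ⋯ → (ψₙ → φ))` for a list of premises. -/
def impsFrom : List (Form S) → Form S → Form S
  | [], φ => φ
  | ψ :: l, φ => Form.impl ψ (impsFrom l φ)

/-- Satisfaction of an L_C formula in a causal model `⟨F, A⟩`. -/
def SatC : Form S → StructFuns S → Env S → Prop
  | Form.eq Y y, _, A => A Y = y
  | Form.neg φ, F, A => ¬ SatC φ F A
  | Form.conj φ ψ, F, A => SatC φ F A ∧ SatC ψ F A
  | Form.int I φ, F, A => SatC φ (intF F I) (intVal F A I)

/-- The proof system L_C. -/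
inductive ThmC : Form S → Prop where
  | taut : ∀ {φ : Form S}, Tauto φ → ThmC φ
  | mp : ∀ {φ ψ : Form S}, ThmC (Form.impl φ ψ) → ThmC φ → ThmC ψ
  | a1 : ∀ (I : Intervention S) (Y : S.Var) (y y' : S.Val Y), y ≠ y' →
      ThmC (Form.impl (Form.int I (Form.eq Y y)) (Form.neg (Form.int I (Form.eq Y y'))))
  | a2 : ∀ (I : Intervention S) (Y : S.Var),
      ThmC (bigOr (((Finset.univ : Finset (S.Val Y)).toList).map
        (fun y => Form.int I (Form.eq Y y))))
  | a3 : ∀ (I : Intervention S) (Y Z : S.Var) (y : S.Val Y) (z : S.Val Z),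
      ThmC (Form.impl (Form.conj (Form.int I (Form.eq Y y)) (Form.int I (Form.eq Z z)))
        (Form.int (iUpd I Y y) (Form.eq Z z)))
  | a4 : ∀ (I : Intervention S) (Y : S.Var) (y : S.Val Y),
      ThmC (Form.int (iUpd I Y y) (Form.eq Y y))
  | a5 : ∀ (I : Intervention S) (Y Z : S.Var) (y : S.Val Y) (z : S.Val Z), Y ≠ Z →
      ThmC (Form.impl
        (Form.conj (Form.int (iUpd I Y y) (Form.eq Z z)) (Form.int (iUpd I Z z) (Form.eq Y y)))
        (Form.int I (Form.eq Z z)))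
  | a6 : ∀ (X : ℕ → S.Var) (k : ℕ),
      (∀ i : ℕ, i ≤ k → X i ≠ X (i + 1)) → X (k + 1) ≠ X 0 →
      ThmC (Form.impl (chainConj X k) (Form.neg (leadsTo (X (k + 1)) (X 0))))
  | a7 : ∀ (I : Intervention S) (U : S.Var) (u : S.Val U), S.exo U → I U = none →
      ThmC (Form.iffF (Form.int (iEmpty S) (Form.eq U u)) (Form.int I (Form.eq U u)))
  | aEmpty : ∀ (Y : S.Var) (y : S.Val Y),
      ThmC (Form.iffF (Form.eq Y y) (Form.int (iEmpty S) (Form.eq Y y)))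
  | aNeg : ∀ (I : Intervention S) (φ : Form S),
      ThmC (Form.iffF (Form.int I (Form.neg φ)) (Form.neg (Form.int I φ)))
  | aConj : ∀ (I : Intervention S) (φ ψ : Form S),
      ThmC (Form.iffF (Form.int I (Form.conj φ ψ))
        (Form.conj (Form.int I φ) (Form.int I ψ)))
  | aIntInt : ∀ (I J : Intervention S) (φ : Form S),
      ThmC (Form.iffF (Form.int I (Form.int J φ)) (Form.int (icomp I J) φ))

/-- Strong derivability from a set of premises in L_C. -/
def ProvC (Γ : Set (Form S)) (φ : Form S) : Prop :=
  ∃ l : List (Form S), (∀ ψ ∈ l, ψ ∈ Γ) ∧ ThmC (impsFrom l φ)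

/-- The language L′_C: Boolean combinations of formulas `[X⃗:=x⃗]Y=y`. -/
inductive IsC' : Form S → Prop where
  | intEq : ∀ (I : Intervention S) (Y : S.Var) (y : S.Val Y),
      IsC' (Form.int I (Form.eq Y y))
  | neg : ∀ {φ : Form S}, IsC' φ → IsC' (Form.neg φ)
  | conj : ∀ {φ ψ : Form S}, IsC' φ → IsC' ψ → IsC' (Form.conj φ ψ)

/-- The translation tr₁ from L_C to L′_C, given as a relation defined by the
recursive clauses of the definition (the theorem below asserts that it is well
defined, i.e. total and functional). -/
inductive Tr1 : Form S → Form S → Prop where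
  | eq : ∀ (Y : S.Var) (y : S.Val Y),
      Tr1 (Form.eq Y y) (Form.int (iEmpty S) (Form.eq Y y))
  | neg : ∀ {φ φ' : Form S}, Tr1 φ φ' → Tr1 (Form.neg φ) (Form.neg φ')
  | conj : ∀ {φ φ' ψ ψ' : Form S}, Tr1 φ φ' → Tr1 ψ ψ' →
      Tr1 (Form.conj φ ψ) (Form.conj φ' ψ')
  | intEq : ∀ (I : Intervention S) (Y : S.Var) (y : S.Val Y),
      Tr1 (Form.int I (Form.eq Y y)) (Form.int I (Form.eq Y y))
  | intNeg : ∀ {I : Intervention S} {φ χ : Form S},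
      Tr1 (Form.neg (Form.int I φ)) χ → Tr1 (Form.int I (Form.neg φ)) χ
  | intConj : ∀ {I : Intervention S} {φ ψ χ : Form S},
      Tr1 (Form.conj (Form.int I φ) (Form.int I ψ)) χ →
      Tr1 (Form.int I (Form.conj φ ψ)) χ
  | intInt : ∀ {I J : Intervention S} {φ χ : Form S},
      Tr1 (Form.int (icomp I J) φ) χ → Tr1 (Form.int I (Form.int J φ)) χ

/-! ### Auxiliary development for the proof -/

section Aux

variable {S : Sig}

/-- Size measure under which the `Tr1` clauses are decreasing. -/
def Form.sz : Form S → ℕ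
  | .eq _ _ => 1
  | .neg φ => Form.sz φ + 1
  | .conj φ ψ => Form.sz φ + Form.sz ψ + 1
  | .int _ φ => 2 * Form.sz φ

lemma Form.sz_pos : ∀ φ : Form S, 0 < Form.sz φ
  | .eq _ _ => Nat.one_pos
  | .neg _ => Nat.succ_pos _
  | .conj _ _ => Nat.succ_pos _
  | .int _ φ => by have := Form.sz_pos φ; simp only [Form.sz]; omega

lemma tr1_exists_aux : ∀ n : ℕ, ∀ φ : Form S, Form.sz φ < n → ∃ φ', Tr1 φ φ' := by
  intro n
  induction n with
  | zero => intro φ h; omega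
  | succ n ih =>
    intro φ h
    match φ with
    | .eq Y y => exact ⟨_, .eq Y y⟩
    | .neg φ =>
      obtain ⟨φ', h'⟩ := ih φ (by simp only [Form.sz] at h; omega)
      exact ⟨_, .neg h'⟩
    | .conj φ ψ =>
      obtain ⟨φ', h1⟩ := ih φ (by simp only [Form.sz] at h; omega)
      obtain ⟨ψ', h2⟩ := ih ψ (by simp only [Form.sz] at h; omega)
      exact ⟨_, .conj h1 h2⟩
    | .int I (.eq Y y) => exact ⟨_, .intEq I Y y⟩
    | .int I (.neg φ) =>
      obtain ⟨χ, hχ⟩ := ih (Form.neg (Form.int I φ))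
        (by simp only [Form.sz] at h ⊢; omega)
      exact ⟨χ, .intNeg hχ⟩
    | .int I (.conj φ ψ) =>
      obtain ⟨χ, hχ⟩ := ih (Form.conj (Form.int I φ) (Form.int I ψ))
        (by simp only [Form.sz] at h ⊢; omega)
      exact ⟨χ, .intConj hχ⟩
    | .int I (.int J φ) =>
      obtain ⟨χ, hχ⟩ := ih (Form.int (icomp I J) φ)
        (by have := Form.sz_pos φ; simp only [Form.sz] at h ⊢; omega)
      exact ⟨χ, .intInt hχ⟩

lemma tr1_exists (φ : Form S) : ∃ φ', Tr1 φ φ' :=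
  tr1_exists_aux (Form.sz φ + 1) φ (Nat.lt_succ_self _)

lemma tr1_unique {φ a : Form S} (h1 : Tr1 φ a) : ∀ {b : Form S}, Tr1 φ b → a = b := by
  induction h1 with
  | eq Y y => intro b h2; cases h2; rfl
  | neg _ ih => intro b h2; cases h2 with | neg h' => rw [ih h']
  | conj _ _ ih1 ih2 => intro b h2; cases h2 with | conj ha hb => rw [ih1 ha, ih2 hb]
  | intEq I Y y => intro b h2; cases h2; rfl
  | intNeg _ ih => intro b h2; cases h2 with | intNeg h' => exact ih h'
  | intConj _ ih => intro b h2; cases h2 with | intConj h' => exact ih h'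
  | intInt _ ih => intro b h2; cases h2 with | intInt h' => exact ih h'

/-! #### Propositional reasoning in `ThmC` -/

lemma thm_iff_refl (φ : Form S) : ThmC (Form.iffF φ φ) := by
  apply ThmC.taut
  intro v hn hc
  simp only [Form.iffF, Form.impl, hn, hc]
  cases v φ <;> rfl

lemma thm_iff_trans {φ ψ χ : Form S} (h1 : ThmC (Form.iffF φ ψ)) (h2 : ThmC (Form.iffF ψ χ)) :
    ThmC (Form.iffF φ χ) := by
  have t : Tauto (Form.impl (Form.iffF φ ψ) (Form.impl (Form.iffF ψ χ) (Form.iffF φ χ))) := by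
    intro v hn hc
    simp only [Form.iffF, Form.impl, hn, hc]
    cases v φ <;> cases v ψ <;> cases v χ <;> rfl
  exact ThmC.mp (ThmC.mp (ThmC.taut t) h1) h2

lemma thm_iff_neg_cong {φ ψ : Form S} (h : ThmC (Form.iffF φ ψ)) :
    ThmC (Form.iffF (Form.neg φ) (Form.neg ψ)) := by
  have t : Tauto (Form.impl (Form.iffF φ ψ) (Form.iffF (Form.neg φ) (Form.neg ψ))) := by
    intro v hn hc
    simp only [Form.iffF, Form.impl, hn, hc]
    cases v φ <;> cases v ψ <;> rfl
  exact ThmC.mp (ThmC.taut t) h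

lemma thm_iff_conj_cong {φ φ' ψ ψ' : Form S} (h1 : ThmC (Form.iffF φ φ'))
    (h2 : ThmC (Form.iffF ψ ψ')) :
    ThmC (Form.iffF (Form.conj φ ψ) (Form.conj φ' ψ')) := by
  have t : Tauto (Form.impl (Form.iffF φ φ') (Form.impl (Form.iffF ψ ψ')
      (Form.iffF (Form.conj φ ψ) (Form.conj φ' ψ')))) := by
    intro v hn hc
    simp only [Form.iffF, Form.impl, hn, hc]
    cases v φ <;> cases v φ' <;> cases v ψ <;> cases v ψ' <;> rfl
  exact ThmC.mp (ThmC.mp (ThmC.taut t) h1) h2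

/-! #### Semantic lemmas -/

/-- `F V` is sensitive to the coordinate `X`. -/
def Sens (G : StructFuns S) (V : S.Var) (X : {X : S.Var // X ≠ V}) : Prop :=
  ∃ (g : Others S V) (x₁ x₂ : S.Val X.val), x₁ ≠ x₂ ∧
    G V (Function.update g X x₁) ≠ G V (Function.update g X x₂)

/-- If two argument tuples differ only on insensitive coordinates, the structural
function takes the same value. -/
lemma indep_aux (G : StructFuns S) (V : S.Var) :
    ∀ n : ℕ, ∀ g g' : Others S V,
      (Finset.univ.filter (fun X : {X : S.Var // X ≠ V} => g X ≠ g' X)).card ≤ n →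
      (∀ X, g X ≠ g' X → ¬ Sens G V X) → G V g = G V g' := by
  intro n
  induction n with
  | zero =>
    intro g g' hcard h
    have : g = g' := by
      funext X
      by_contra hne
      have : X ∈ Finset.univ.filter (fun X : {X : S.Var // X ≠ V} => g X ≠ g' X) := by
        simp [hne]
      have := Finset.card_pos.mpr ⟨X, this⟩
      omega
    rw [this]
  | succ n ih =>
    intro g g' hcard h
    by_cases hgg : g = g'
    · rw [hgg]
    · have : ∃ X, g X ≠ g' X := by
        by_contra hno
        push_neg at hno
        exact hgg (funext hno)
      obtain ⟨X, hX⟩ := this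
      set g'' : Others S V := Function.update g X (g' X) with hg''
      have step1 : G V g = G V g'' := by
        by_contra hne
        exact h X hX ⟨g, g X, g' X, hX, by rwa [Function.update_eq_self]⟩
      have hagree : ∀ Y, g'' Y ≠ g' Y → (Y ≠ X ∧ g Y ≠ g' Y) := by
        intro Y hY
        have hYX : Y ≠ X := by
          intro he; subst he; simp [hg''] at hY
        refine ⟨hYX, ?_⟩
        rwa [hg'', Function.update_of_ne hYX] at hY
      rw [step1]
      apply ih g'' g'
      · have hsub : (Finset.univ.filter (fun Y : {X : S.Var // X ≠ V} => g'' Y ≠ g' Y)) ⊆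
            (Finset.univ.filter (fun Y : {X : S.Var // X ≠ V} => g Y ≠ g' Y)).erase X := by
          intro Y hY
          simp only [Finset.mem_filter, Finset.mem_univ, true_and] at hY
          obtain ⟨h1, h2⟩ := hagree Y hY
          simp [Finset.mem_erase, h1, h2]
        have hXmem : X ∈ Finset.univ.filter (fun Y : {X : S.Var // X ≠ V} => g Y ≠ g' Y) := by
          simp [hX]
        calc (Finset.univ.filter (fun Y : {X : S.Var // X ≠ V} => g'' Y ≠ g' Y)).card
            ≤ ((Finset.univ.filter (fun Y : {X : S.Var // X ≠ V} => g Y ≠ g' Y)).erase X).card :=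
              Finset.card_le_card hsub
          _ = (Finset.univ.filter (fun Y : {X : S.Var // X ≠ V} => g Y ≠ g' Y)).card - 1 :=
              Finset.card_erase_of_mem hXmem
          _ ≤ n := by omega
      · intro Y hY
        exact h Y (hagree Y hY).2

lemma indep (G : StructFuns S) (V : S.Var) (g g' : Others S V)
    (h : ∀ X, g X ≠ g' X → ¬ Sens G V X) : G V g = G V g' :=
  indep_aux G V _ g g' le_rfl h

/-- Direct causal dependence of the intervened family is included in that of the
original family. -/
lemma dirAff_intF {F : StructFuns S} {I : Intervention S} {X V : S.Var}
    (h : DirAff (intF F I) X V) : DirAff F X V := by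
  obtain ⟨hV, hne, g, x₁, x₂, hx, hG⟩ := h
  rcases hI : I V with _ | v
  · refine ⟨hV, hne, g, x₁, x₂, hx, ?_⟩
    simpa only [intF, hI, Option.getD_none] using hG
  · exfalso; apply hG; simp [intF, hI]

lemma recursive_intF {F : StructFuns S} (hF : RecursiveF F) (I : Intervention S) :
    RecursiveF (intF F I) := by
  intro a b hab hba
  exact hF a b (Relation.TransGen.mono (fun _ _ => dirAff_intF) _ _ hab) (Relation.TransGen.mono (fun _ _ => dirAff_intF) _ _ hba)

lemma wf_of_recursive {G : StructFuns S} (hG : RecursiveF G) :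
    WellFounded (Relation.TransGen (DirAff G)) := by
  have : IsIrrefl S.Var (Relation.TransGen (DirAff G)) := ⟨fun a h => hG a a h h⟩
  exact Finite.wellFounded_of_trans_of_irrefl _

/-- Pigeonhole: a relation with a choice of predecessor on a finite nonempty type
has a cycle. -/
lemma exists_cycle {α : Type*} [Finite α] [Nonempty α] (r : α → α → Prop) (f : α → α)
    (hf : ∀ a, r (f a) a) : ∃ a, Relation.TransGen r a a := by
  obtain ⟨a⟩ := ‹Nonempty α›
  have key : ∀ (k : ℕ) (b : α), Relation.TransGen r (f^[k + 1] b) b := by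
    intro k
    induction k with
    | zero => intro b; simpa using Relation.TransGen.single (hf b)
    | succ k ih =>
      intro b
      rw [show k + 1 + 1 = (k + 1) + 1 from rfl, Function.iterate_succ_apply]
      exact (ih (f b)).tail (hf b)
  have main : ∀ i j : ℕ, i < j → f^[i] a = f^[j] a → ∃ x, Relation.TransGen r x x := by
    intro i j hij he
    obtain ⟨d, hd⟩ : ∃ d, j = d + 1 + i := ⟨j - i - 1, by omega⟩
    refine ⟨f^[i] a, ?_⟩
    have h1 : Relation.TransGen r (f^[d + 1] (f^[i] a)) (f^[i] a) := key d _
    rwa [← Function.iterate_add_apply, ← hd, ← he] at h1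
  obtain ⟨i, j, hne, heq⟩ := Finite.exists_ne_map_eq_of_infinite (fun n : ℕ => f^[n] a)
  rcases hne.lt_or_gt with h | h
  · exact main i j h heq
  · exact main j i h heq.symm

/-- Uniqueness of the intervened valuation. -/
lemma unique_intervened {F : StructFuns S} (hF : RecursiveF F) {A : Env S}
    {I : Intervention S} {A₁ A₂ : Env S} (h1 : IntervenedVal F A I A₁)
    (h2 : IntervenedVal F A I A₂) : A₁ = A₂ := by
  by_contra hne
  set G := intF F I with hGdef
  have hG : RecursiveF G := recursive_intF hF I
  set D : Finset S.Var := Finset.univ.filter (fun V => A₁ V ≠ A₂ V) with hD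
  have hDne : D.Nonempty := by
    have : ∃ V, A₁ V ≠ A₂ V := by
      by_contra hno; push_neg at hno; exact hne (funext hno)
    obtain ⟨V, hV⟩ := this
    exact ⟨V, by simp [hD, hV]⟩
  have hstep : ∀ V ∈ D, ∃ X ∈ D, DirAff G X V := by
    intro V hV
    have hVne : A₁ V ≠ A₂ V := by simpa [hD] using hV
    by_cases hexo : S.exo V
    · exfalso
      rcases hI : I V with _ | v
      · exact hVne ((h1.2.1 V hexo hI).trans (h2.2.1 V hexo hI).symm)
      · exact hVne ((h1.1 V hexo v hI).trans (h2.1 V hexo v hI).symm)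
    · have e1 : A₁ V = G V (A₁.restrict V) := h1.2.2 V hexo
      have e2 : A₂ V = G V (A₂.restrict V) := h2.2.2 V hexo
      by_contra hno
      push_neg at hno
      apply hVne
      rw [e1, e2]
      apply indep
      intro X hX hSens
      obtain ⟨g, x₁, x₂, hx, hGne⟩ := hSens
      have hXD : X.val ∈ D := by
        simp only [hD, Finset.mem_filter, Finset.mem_univ, true_and]
        exact hX
      exact hno X.val hXD ⟨hexo, X.2, g, x₁, x₂, hx, hGne⟩
  have : Nonempty {V // V ∈ D} := ⟨⟨hDne.choose, hDne.choose_spec⟩⟩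
  let f : {V // V ∈ D} → {V // V ∈ D} := fun a =>
    ⟨(hstep a.1 a.2).choose, (hstep a.1 a.2).choose_spec.1⟩
  have hf : ∀ a : {V // V ∈ D}, DirAff G (f a).val a.val := fun a =>
    (hstep a.1 a.2).choose_spec.2
  obtain ⟨x, hx⟩ := exists_cycle (fun a b : {V // V ∈ D} => DirAff G a.val b.val) f hf
  have : Relation.TransGen (DirAff G) x.val x.val :=
    Relation.TransGen.lift (fun a : {V // V ∈ D} => a.val) (fun _ _ h => h) _ _ hx
  exact hG _ _ this this

/-- Existence of the intervened valuation. -/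
lemma exists_intervened (F : StructFuns S) (hF : RecursiveF F) (A : Env S)
    (I : Intervention S) : ∃ A', IntervenedVal F A I A' := by
  set G := intF F I with hGdef
  have hG : RecursiveF G := recursive_intF hF I
  have hwf : WellFounded (Relation.TransGen (DirAff G)) := wf_of_recursive hG
  set r := Relation.TransGen (DirAff G) with hr
  let step : ∀ V : S.Var, (∀ X, r X V → S.Val X) → S.Val V := fun V rec =>
    if S.exo V then (I V).getD (A V)
    else G V (fun X => if h : r X.val V then rec X.val h else A X.val)
  let A' : Env S := fun V => hwf.fix step V
  have hfix : ∀ V, A' V = step V (fun X _ => A' X) := fun V => hwf.fix_eq step V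
  refine ⟨A', ?_, ?_, ?_⟩
  · intro X hX v hv
    rw [hfix]
    simp [step, hX, hv]
  · intro X hX hv
    rw [hfix]
    simp [step, hX, hv]
  · intro V hV
    rw [hfix]
    simp only [step, if_neg hV]
    show G V _ = G V (A'.restrict V)
    apply indep
    intro X hX hSens
    have hnr : ¬ r X.val V := by
      intro hrXV
      apply hX
      simp only [dif_pos hrXV]
      rfl
    apply hnr
    apply Relation.TransGen.single
    obtain ⟨g, x₁, x₂, hx, hGne⟩ := hSens
    exact ⟨hV, X.2, g, x₁, x₂, hx, hGne⟩

lemma intVal_spec {F : StructFuns S} (hF : RecursiveF F) (A : Env S) (I : Intervention S) :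
    IntervenedVal F A I (intVal F A I) :=
  Classical.epsilon_spec (exists_intervened F hF A I)

lemma intVal_empty {F : StructFuns S} {A : Env S} (hF : RecursiveF F) (hA : Complies F A) :
    intVal F A (iEmpty S) = A := by
  apply unique_intervened hF (intVal_spec hF A (iEmpty S))
  refine ⟨?_, ?_, ?_⟩
  · intro X _ v hv; simp [iEmpty] at hv
  · intro X _ _; rfl
  · intro V hV
    simpa [intF, iEmpty] using hA V hV

lemma complies_intVal {F : StructFuns S} (hF : RecursiveF F) (A : Env S) (I : Intervention S) :
    Complies (intF F I) (intVal F A I) := fun V hV => (intVal_spec hF A I).2.2 V hV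

lemma intF_icomp (F : StructFuns S) (I J : Intervention S) :
    intF (intF F I) J = intF F (icomp I J) := by
  funext V g
  simp only [intF, icomp]
  cases J V <;> simp

lemma intVal_icomp {F : StructFuns S} (hF : RecursiveF F) (A : Env S) (I J : Intervention S) :
    intVal (intF F I) (intVal F A I) J = intVal F A (icomp I J) := by
  have h₁ := intVal_spec hF A I
  have hpred : IntervenedVal (intF F I) (intVal F A I) J = IntervenedVal F A (icomp I J) := by
    funext A'
    apply propext
    constructor
    · rintro ⟨p1, p2, p3⟩
      refine ⟨?_, ?_, ?_⟩
      · intro X hX v hv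
        rcases hJ : J X with _ | w
        · have hI : I X = some v := by simpa [icomp, hJ] using hv
          rw [p2 X hX hJ]
          exact h₁.1 X hX v hI
        · have : w = v := by simpa [icomp, hJ] using hv
          subst this
          exact p1 X hX w hJ
      · intro X hX hv
        have hJ : J X = none := by
          rcases hJ : J X with _ | w
          · rfl
          · simp [icomp, hJ] at hv
        have hI : I X = none := by simpa [icomp, hJ] using hv
        rw [p2 X hX hJ]
        exact h₁.2.1 X hX hI
      · intro V hV
        rw [p3 V hV, intF_icomp]
    · rintro ⟨q1, q2, q3⟩
      refine ⟨?_, ?_, ?_⟩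
      · intro X hX v hv
        exact q1 X hX v (by simp [icomp, hv])
      · intro X hX hv
        rcases hI : I X with _ | w
        · rw [q2 X hX (by simp [icomp, hv, hI]), h₁.2.1 X hX hI]
        · rw [q1 X hX w (by simp [icomp, hv, hI]), h₁.1 X hX w hI]
      · intro V hV
        rw [q3 V hV, intF_icomp]
  show Classical.epsilon _ = Classical.epsilon _
  rw [hpred]

/-! #### Main properties of `Tr1` -/

lemma tr1_props {φ φ' : Form S} (h : Tr1 φ φ') :
    IsC' φ' ∧ ThmC (Form.iffF φ φ') ∧
      ∀ (F : StructFuns S) (A : Env S), RecursiveF F → Complies F A →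
        (SatC φ F A ↔ SatC φ' F A) := by
  induction h with
  | eq Y y =>
    refine ⟨.intEq _ _ _, ThmC.aEmpty Y y, ?_⟩
    intro F A hF hA
    show (A Y = y) ↔ (intVal F A (iEmpty S) Y = y)
    rw [intVal_empty hF hA]
  | neg _ ih =>
    exact ⟨.neg ih.1, thm_iff_neg_cong ih.2.1,
      fun F A hF hA => not_congr (ih.2.2 F A hF hA)⟩
  | conj _ _ ih1 ih2 =>
    exact ⟨.conj ih1.1 ih2.1, thm_iff_conj_cong ih1.2.1 ih2.2.1,
      fun F A hF hA => and_congr (ih1.2.2 F A hF hA) (ih2.2.2 F A hF hA)⟩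
  | intEq I Y y =>
    exact ⟨.intEq I Y y, thm_iff_refl _, fun _ _ _ _ => Iff.rfl⟩
  | @intNeg I φ χ _ ih =>
    exact ⟨ih.1, thm_iff_trans (ThmC.aNeg I φ) ih.2.1, fun F A hF hA => ih.2.2 F A hF hA⟩
  | @intConj I φ ψ χ _ ih =>
    exact ⟨ih.1, thm_iff_trans (ThmC.aConj I φ ψ) ih.2.1, fun F A hF hA => ih.2.2 F A hF hA⟩
  | @intInt I J φ χ _ ih =>
    refine ⟨ih.1, thm_iff_trans (ThmC.aIntInt I J φ) ih.2.1, ?_⟩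
    intro F A hF hA
    have hsem := ih.2.2 F A hF hA
    show SatC φ (intF (intF F I) J) (intVal (intF F I) (intVal F A I) J) ↔ SatC χ F A
    rw [intF_icomp, intVal_icomp hF]
    exact hsem

end Aux

/-- Theorem: the translation tr₁ is well defined (it assigns to each L_C formula a
unique translation) and, for every L_C formula `φ`: (1) `tr₁(φ)` is an L′_C
formula; (2) `φ ↔ tr₁(φ)` is provable in the system L_C; (3) `φ ↔ tr₁(φ)` is
valid over recursive causal models. -/
theorem tr1_well_defined_and_correct (S : Sig) (φ : Form S) :
    (∃! φ' : Form S, Tr1 φ φ') ∧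
      ∀ φ' : Form S, Tr1 φ φ' →
        IsC' φ' ∧
        ThmC (Form.iffF φ φ') ∧
        ∀ (F : StructFuns S) (A : Env S), RecursiveF F → Complies F A →
          (SatC φ F A ↔ SatC φ' F A) := by
  obtain ⟨φ', hφ'⟩ := tr1_exists φ
  exact ⟨⟨φ', hφ', fun ψ hψ => tr1_unique hψ hφ'⟩, fun ψ hψ => tr1_props hψ⟩
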